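/- Let 𝔽 be a field and f : V_1×⋯×V_k → 𝔽 a multilinear map between finite-dimensional 𝔽-vector spaces with dim V_i = n_i. Let F and G be two k-tuples of complete flags of V_1,…,V_k. Then there exist permutations φ_i : [n_i] → [n_i] (i ∈ [k]) such that (φ_1×⋯×φ_k)(M_G f) ⊆ supp_F f, where M_G f is the set of maximal points of supp_G f in the product order. -/

import Mathlib

open scoped BigOperators
open scoped Classical
open scoped ComplexOrder

noncomputable section

namespace CVZ

variable {k : ℕ}

/-- A concrete `k`-tensor over `F` with index types `I i`: the coefficient array
(in the standard bases) of a multilinear map `V₁ × ⋯ × V_k → F` with `dim V_i = |I i|`. -/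
abbrev Tensor (F : Type*) (I : Fin k → Type*) : Type _ := (∀ i, I i) → F

section Basic

variable {F : Type*} [Field F] {I J : Fin k → Type*}
  [∀ i, Fintype (I i)] [∀ i, DecidableEq (I i)]
  [∀ i, Fintype (J i)] [∀ i, DecidableEq (J i)]

/-- Coefficient array of the restriction `f ∘ (A₁, …, A_k)`, where `A_i : W_i → V_i`
is given by the matrix `A i`. -/
def restrictBy (A : ∀ i, Matrix (I i) (J i) F) (t : Tensor F I) : Tensor F J :=
  fun β => ∑ α : ∀ i, I i, (∏ i, A i (α i) (β i)) * t α

/-- `t` restricts to `s`. -/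
def Restricts (t : Tensor F I) (s : Tensor F J) : Prop :=
  ∃ A : ∀ i, Matrix (I i) (J i) F, restrictBy A t = s

/-- A choice of bases of the spaces `V_i`, encoded as a tuple of invertible matrices. -/
def IsBasisTuple (B : ∀ i, Matrix (I i) (I i) F) : Prop := ∀ i, IsUnit (B i)

/-- Support of a tensor (with respect to the standard bases). -/
def supp (t : Tensor F I) : Set (∀ i, I i) := {α | t α ≠ 0}

end Basic

section Entropy

/-- A probability distribution on the finite set `X`. -/
def IsProbDist {X : Type*} [Fintype X] (P : X → ℝ) : Prop :=
  (∀ x, 0 ≤ P x) ∧ ∑ x, P x = 1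

/-- Base-2 Shannon entropy. -/
def H2 {X : Type*} [Fintype X] (P : X → ℝ) : ℝ :=
  ∑ x, -(P x * Real.logb 2 (P x))

variable {I : Fin k → Type*} [∀ i, Fintype (I i)] [∀ i, DecidableEq (I i)]

/-- The `i`-th marginal of a distribution on a product set. -/
def marg (P : (∀ i, I i) → ℝ) (i : Fin k) : I i → ℝ :=
  fun a => ∑ α : ∀ i, I i, if α i = a then P α else 0

/-- `H_θ(P)`, the `θ`-weighted average of the marginal entropies. -/
def Hw (θ : Fin k → ℝ) (P : (∀ i, I i) → ℝ) : ℝ :=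
  ∑ i, θ i * H2 (marg P i)

/-- `H_θ(Φ)`, the supremum of `H_θ(P)` over distributions `P` supported on `Φ`. -/
def HwSet (θ : Fin k → ℝ) (Φ : Set (∀ i, I i)) : ℝ :=
  sSup {h | ∃ P : (∀ i, I i) → ℝ, IsProbDist P ∧ (∀ α, P α ≠ 0 → α ∈ Φ) ∧ h = Hw θ P}

/-- Maximal points of a subset of the product order. -/
def maxPoints [∀ i, LinearOrder (I i)] (Φ : Set (∀ i, I i)) : Set (∀ i, I i) :=
  {α | α ∈ Φ ∧ ∀ β ∈ Φ, ¬ α < β}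

end Entropy

section SuppFunc

variable {F : Type*} [Field F] {I : Fin k → Type*} [∀ i, Fintype (I i)] [∀ i, DecidableEq (I i)]

/-- The logarithmic Strassen upper support functional `ρ^θ`. -/
def rhoUpper (θ : Fin k → ℝ) (t : Tensor F I) : ℝ :=
  sInf {h | ∃ B : ∀ i, Matrix (I i) (I i) F, IsBasisTuple B ∧
    h = HwSet θ (supp (restrictBy B t))}

/-- The Strassen upper support functional `ζ^θ`. -/
def zetaUpper (θ : Fin k → ℝ) (t : Tensor F I) : ℝ :=
  if t = 0 then 0 else (2 : ℝ) ^ rhoUpper θ t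

/-- The logarithmic Strassen lower support functional `ρ_θ`. -/
def rhoLower [∀ i, LinearOrder (I i)] (θ : Fin k → ℝ) (t : Tensor F I) : ℝ :=
  sSup {h | ∃ B : ∀ i, Matrix (I i) (I i) F, IsBasisTuple B ∧
    h = HwSet θ (maxPoints (supp (restrictBy B t)))}

/-- The Strassen lower support functional `ζ_θ`. -/
def zetaLower [∀ i, LinearOrder (I i)] (θ : Fin k → ℝ) (t : Tensor F I) : ℝ :=
  if t = 0 then 0 else (2 : ℝ) ^ rhoLower θ t

/-- The instability of a tensor. -/
def instab (t : Tensor F I) : ℝ :=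
  sSup {ε : ℝ | 0 ≤ ε ∧ ∃ B : ∀ i, Matrix (I i) (I i) F, IsBasisTuple B ∧
    ∃ w : ∀ i, I i → ℝ, (∀ i x, 0 ≤ w i x) ∧ (∀ i, ∃ x, w i x ≠ 0) ∧
      ∀ a ∈ supp (restrictBy B t), ∑ i, w i (a i) ≤
        ∑ i, ((∑ x : I i, w i x) / (Fintype.card (I i) : ℝ) - ε * ⨆ x : I i, w i x)}

end SuppFunc

section Ops

variable {F : Type*} [Field F]

/-- The unit tensor `⟨r⟩`. -/
def unitTensor (F : Type*) [Field F] (k r : ℕ) : Tensor F (fun _ : Fin k => Fin r) :=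
  fun α => if ∀ i j : Fin k, α i = α j then 1 else 0

variable {n m : Fin k → ℕ}

/-- Direct sum of two tensors, with the concatenated (naturally ordered) bases. -/
def dirSumFin (s : Tensor F fun i => Fin (n i)) (t : Tensor F fun i => Fin (m i)) :
    Tensor F fun i => Fin (n i + m i) :=
  fun α =>
    (if h : ∀ i, (α i : ℕ) < n i then s (fun i => ⟨(α i : ℕ), h i⟩) else 0) +
    (if h : ∀ i, n i ≤ (α i : ℕ) then
      t (fun i => ⟨(α i : ℕ) - n i, by have h1 := (α i).isLt; have h2 := h i; omega⟩) else 0)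

/-- Tensor (Kronecker) product of two tensors, with the product bases ordered naturally. -/
def tensMulFin (s : Tensor F fun i => Fin (n i)) (t : Tensor F fun i => Fin (m i)) :
    Tensor F fun i => Fin (n i * m i) :=
  fun α =>
    s (fun i => ⟨(α i : ℕ) / m i, by
      have h := (α i).isLt
      exact Nat.div_lt_of_lt_mul (lt_of_lt_of_le h (Nat.mul_comm (n i) (m i)).le)⟩) *
    t (fun i => ⟨(α i : ℕ) % m i, by
      have h := (α i).isLt
      have hpos : 0 < n i * m i := Nat.lt_of_le_of_lt (Nat.zero_le _) h
      have hm : 0 < m i := by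
        rcases Nat.eq_zero_or_pos (m i) with h0 | h0
        · simp [h0] at hpos
        · exact h0
      exact Nat.mod_lt _ hm⟩)

/-- The `N`-th tensor power of a tensor (grouping the legs into `k` groups). -/
def tpow {I : Fin k → Type*} (t : Tensor F I) (N : ℕ) : Tensor F fun i => Fin N → I i :=
  fun α => ∏ j : Fin N, t fun i => α i j

end Ops

section Subrank

variable {F : Type*} [Field F] {I : Fin k → Type*} [∀ i, Fintype (I i)] [∀ i, DecidableEq (I i)]

/-- The subrank `Q(t)` of a tensor: the largest `r` with `⟨r⟩ ≤ t`. -/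
def Qtensor (t : Tensor F I) : ℕ :=
  sSup {r : ℕ | Restricts t (unitTensor F k r)}

/-- A slice: a tensor of the form `v ⊗ w` with `v` in the `j`-th leg. -/
def IsSlice (s : Tensor F I) : Prop :=
  ∃ (j : Fin k) (v : I j → F) (w : (∀ i : {i : Fin k // i ≠ j}, I i.1) → F),
    ∀ α, s α = v (α j) * w (fun i => α i.1)

/-- The slice rank of a tensor. -/
def sliceRank (t : Tensor F I) : ℕ :=
  sInf {r : ℕ | ∃ c : Fin r → Tensor F I, (∀ a, IsSlice (c a)) ∧ t = ∑ a, c a}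

end Subrank

section Combinatorial

variable {I : Fin k → Type*}

/-- A diagonal: any two distinct elements differ in all coordinates. -/
def IsDiagonal (D : Set (∀ i, I i)) : Prop :=
  ∀ a ∈ D, ∀ b ∈ D, a ≠ b → ∀ i, a i ≠ b i

/-- The `i`-th projection of a set of tuples. -/
def projSet (D : Set (∀ i, I i)) (i : Fin k) : Set (I i) := {x | ∃ a ∈ D, a i = x}

/-- A free diagonal in `Φ`: a diagonal `D` with `D = Φ ∩ (D₁ × ⋯ × D_k)`. -/
def IsFreeDiagonal (D Φ : Set (∀ i, I i)) : Prop :=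
  IsDiagonal D ∧ D = Φ ∩ {a | ∀ i, a i ∈ projSet D i}

/-- The (combinatorial) subrank of a set: the maximal size of a free diagonal. -/
def Qset (Φ : Set (∀ i, I i)) : ℕ :=
  sSup {r : ℕ | ∃ D : Set (∀ i, I i), IsFreeDiagonal D Φ ∧ D.ncard = r}

/-- The `N`-fold coordinatewise power of a set of tuples. -/
def setPow (Φ : Set (∀ i, I i)) (N : ℕ) : Set (∀ i, Fin N → I i) :=
  {α | ∀ j : Fin N, (fun i => α i j) ∈ Φ}

/-- A tight set. -/
def TightSet (Φ : Set (∀ i, I i)) : Prop :=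
  ∃ u : ∀ i, I i → ℤ, (∀ i, Function.Injective (u i)) ∧ ∀ α ∈ Φ, ∑ i, u i (α i) = 0

/-- `Φ` is a combinatorial degeneration of `Ψ` (written `Ψ ⊵ Φ`). -/
def CombDegen (Ψ Φ : Set (∀ i, I i)) : Prop :=
  Φ ⊆ Ψ ∧ ∃ u : ∀ i, I i → ℤ,
    (∀ α ∈ Φ, ∑ i, u i (α i) = 0) ∧ ∀ α ∈ Ψ, α ∉ Φ → 0 < ∑ i, u i (α i)

end Combinatorial

/-- A tight tensor: some basis tuple gives a tight support. -/
def TightTensor {F : Type*} [Field F] {I : Fin k → Type*} [∀ i, Fintype (I i)]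
    [∀ i, DecidableEq (I i)] (t : Tensor F I) : Prop :=
  ∃ B : ∀ i, Matrix (I i) (I i) F, IsBasisTuple B ∧ TightSet (supp (restrictBy B t))

/-- A complete (decreasing) flag of subspaces, `W 0 = ⊤` and `dim (W j) = dim V − j`. -/
def IsCompleteFlag (F : Type*) [Field F] {V : Type*} [AddCommGroup V] [Module F V]
    (W : ℕ → Submodule F V) : Prop :=
  Antitone W ∧ W 0 = ⊤ ∧ ∀ j : ℕ, Module.finrank F (W j) = Module.finrank F V - j

/-- Evaluation of (the multilinear map associated with) `t` at a tuple of vectors. -/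
def eval {F : Type*} [Field F] {I : Fin k → Type*} [∀ i, Fintype (I i)] [∀ i, DecidableEq (I i)]
    (t : Tensor F I) (v : ∀ i, I i → F) : F :=
  ∑ α : ∀ i, I i, (∏ i, v i (α i)) * t α

/-- The support of `t` with respect to a tuple of complete flags. -/
def suppFlag {F : Type*} [Field F] {n : Fin k → ℕ} (t : Tensor F fun i => Fin (n i))
    (W : ∀ i, ℕ → Submodule F (Fin (n i) → F)) : Set (∀ i, Fin (n i)) :=
  {α | ∃ v : ∀ i, Fin (n i) → F, (∀ i, v i ∈ W i (α i : ℕ)) ∧ eval t v ≠ 0}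

section Quantum

variable {I : Fin k → Type*} [∀ i, Fintype (I i)] [∀ i, DecidableEq (I i)]

/-- Von Neumann entropy (base 2) of a Hermitian matrix. -/
def vnEntropy {d : Type*} [Fintype d] [DecidableEq d] (ρ : Matrix d d ℂ) : ℝ :=
  if h : ρ.IsHermitian then ∑ x, -(h.eigenvalues x * Real.logb 2 (h.eigenvalues x)) else 0

/-- The `j`-th marginal (reduced density matrix) of the pure state `|t⟩⟨t| / ⟨t|t⟩`. -/
def margMat (t : Tensor ℂ I) (j : Fin k) : Matrix (I j) (I j) ℂ :=
  fun a b =>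
    (∑ α : ∀ i, I i, ∑ β : ∀ i, I i,
      if α j = a ∧ β j = b ∧ (∀ i, i ≠ j → α i = β i) then t α * star (t β) else 0) /
    ∑ α : ∀ i, I i, t α * star (t α)

/-- The logarithmic lower quantum functional `E_θ` for `θ` a distribution on `[k]`. -/
def Ewq (θ : Fin k → ℝ) (t : Tensor ℂ I) : ℝ :=
  sSup {h | ∃ A : ∀ i, Matrix (I i) (I i) ℂ, IsBasisTuple A ∧
    h = ∑ j, θ j * vnEntropy (margMat (restrictBy A t) j)}

/-- The marginal (reduced density matrix) on the legs in `S` of the pure state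
`|t⟩⟨t| / ⟨t|t⟩`. -/
def margMatSet (t : Tensor ℂ I) (S : Finset (Fin k)) :
    Matrix (∀ i : {x : Fin k // x ∈ S}, I i.1) (∀ i : {x : Fin k // x ∈ S}, I i.1) ℂ :=
  fun a b =>
    (∑ α : ∀ i, I i, ∑ β : ∀ i, I i,
      if (∀ (i : Fin k) (hi : i ∈ S), α i = a ⟨i, hi⟩ ∧ β i = b ⟨i, hi⟩) ∧
         (∀ i, i ∉ S → α i = β i)
      then t α * star (t β) else 0) /
    ∑ α : ∀ i, I i, t α * star (t α)

/-- A probability distribution on the bipartitions `{S, S̄}` of `[k]` (encoded by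
choosing a representative `S` for each bipartition occurring in the support). -/
def IsBipDist (θ : Finset (Fin k) → ℝ) : Prop :=
  (∀ S, 0 ≤ θ S) ∧ (∀ S, θ S ≠ 0 → S.Nonempty ∧ Sᶜ.Nonempty) ∧
    ∑ S : Finset (Fin k), θ S = 1

/-- The logarithmic lower quantum functional `E_θ` for `θ` a distribution on bipartitions. -/
def EwqBip (θ : Finset (Fin k) → ℝ) (t : Tensor ℂ I) : ℝ :=
  sSup {h | ∃ A : ∀ i, Matrix (I i) (I i) ℂ, IsBasisTuple A ∧
    h = ∑ S : Finset (Fin k), θ S * vnEntropy (margMatSet (restrictBy A t) S)}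

/-- The lower quantum functional `F_θ`. -/
def FwqBip (θ : Finset (Fin k) → ℝ) (t : Tensor ℂ I) : ℝ :=
  if t = 0 then 0 else (2 : ℝ) ^ EwqBip θ t

/-- Degeneration: `t` lies in the closure of the `GL × ⋯ × GL`-orbit of `s`. -/
def Degen (s t : Tensor ℂ I) : Prop :=
  t ∈ closure {u : Tensor ℂ I | ∃ A : ∀ i, Matrix (I i) (I i) ℂ,
    IsBasisTuple A ∧ restrictBy A s = u}

end Quantum

/-- Trace norm of a complex matrix: `Tr √(AᴴA)`. -/
def traceNorm {d : Type*} [Fintype d] [DecidableEq d] (A : Matrix d d ℂ) : ℝ :=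
  ((let hA := (Matrix.posSemidef_conjTranspose_mul_self A).1
    (hA.eigenvectorUnitary : Matrix d d ℂ) *
      Matrix.diagonal (fun i => ((Real.sqrt (hA.eigenvalues i) : ℝ) : ℂ)) *
      (star hA.eigenvectorUnitary : Matrix d d ℂ)).trace).re

/-- `conjIter ρ X j = X_j ⋯ X_2 X_1 ρ X_1 X_2 ⋯ X_j`. -/
def conjIter {d : Type*} [Fintype d] (ρ : Matrix d d ℂ) {n : ℕ}
    (X : Fin n → Matrix d d ℂ) : ℕ → Matrix d d ℂ
  | 0 => ρ
  | (j + 1) => if h : j < n then X ⟨j, h⟩ * conjIter ρ X j * X ⟨j, h⟩ else conjIter ρ X j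

/-- A tricolored sum-free set in `G × G × G`. -/
def IsTriColoredSumFree {G : Type*} [AddCommGroup G] (Γ : Set (G × G × G)) : Prop :=
  (∀ a ∈ Γ, ∀ b ∈ Γ, a ≠ b → a.1 ≠ b.1 ∧ a.2.1 ≠ b.2.1 ∧ a.2.2 ≠ b.2.2) ∧
  ∀ x y z : G, (∃ a ∈ Γ, a.1 = x) → (∃ a ∈ Γ, a.2.1 = y) → (∃ a ∈ Γ, a.2.2 = z) →
    (x + y + z = 0 ↔ (x, y, z) ∈ Γ)

/-- The maximal size `s₃(G)` of a tricolored sum-free set in `G × G × G`. -/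
def s3 (G : Type*) [AddCommGroup G] : ℕ :=
  sSup {r : ℕ | ∃ Γ : Set (G × G × G), IsTriColoredSumFree Γ ∧ Γ.ncard = r}

/-- Binary entropy function (base 2), with the convention `0 · log 0 = 0`. -/
def binH (p : ℝ) : ℝ := -(p * Real.logb 2 p) - (1 - p) * Real.logb 2 (1 - p)

open Filter Topology

section Statement5Aux

variable {F : Type*} [Field F]

lemma le_sup_span_of_codim_le_one {V : Type*} [AddCommGroup V] [Module F V]
    [FiniteDimensional F V] {W' W : Submodule F V} (hle : W' ≤ W)
    (hr : Module.finrank F W ≤ Module.finrank F W' + 1)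
    {x : V} (hx : x ∈ W) (hx' : x ∉ W') : W ≤ W' ⊔ Submodule.span F {x} := by
  set U := W' ⊔ Submodule.span F {x} with hU
  have hUW : U ≤ W := sup_le hle ((Submodule.span_singleton_le_iff_mem x W).2 hx)
  have hlt : W' < U := by
    refine lt_of_le_of_ne le_sup_left ?_
    intro h
    exact hx' (h ▸ (le_sup_right : Submodule.span F {x} ≤ U)
      (Submodule.mem_span_singleton_self x))
  have h1 : Module.finrank F W' < Module.finrank F U :=
    Submodule.finrank_lt_finrank_of_lt hlt
  have h2 : Module.finrank F U ≤ Module.finrank F W := Submodule.finrank_mono hUW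
  exact (Submodule.eq_of_le_of_finrank_le hUW (by omega)).ge

/-- Given two complete flags `G` and `Fl` of `Fin n → F`, there is a basis-like family `b`
adapted to `G`, together with a permutation `w` such that `b α ∈ Fl (w α)`. -/
lemma exists_adapted {n : ℕ} {G Fl : ℕ → Submodule F (Fin n → F)}
    (hG : IsCompleteFlag F G) (hFl : IsCompleteFlag F Fl) :
    ∃ (b : Fin n → (Fin n → F)) (w : Equiv.Perm (Fin n)),
      (∀ α : Fin n, b α ∈ G (α : ℕ)) ∧
      (∀ α : Fin n, b α ∈ Fl ((w α : ℕ))) ∧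
      (∀ j : ℕ, G j ≤ Submodule.span F {x | ∃ γ : Fin n, j ≤ (γ : ℕ) ∧ x = b γ}) := by
  obtain ⟨hGa, hGtop, hGr⟩ := hG
  obtain ⟨hFla, hFltop, hFlr⟩ := hFl
  have hVr : Module.finrank F (Fin n → F) = n := Module.finrank_fin_fun F
  have hGr' : ∀ j, Module.finrank F (G j) = n - j := fun j => by rw [hGr, hVr]
  have hFlr' : ∀ j, Module.finrank F (Fl j) = n - j := fun j => by rw [hFlr, hVr]
  have hFlbot : ∀ j, n ≤ j → Fl j = ⊥ := by
    intro j hj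
    have : Module.finrank F (Fl j) = 0 := by rw [hFlr']; omega
    exact Submodule.finrank_eq_zero.mp this
  have hGbot : ∀ j, n ≤ j → G j = ⊥ := by
    intro j hj
    have : Module.finrank F (G j) = 0 := by rw [hGr']; omega
    exact Submodule.finrank_eq_zero.mp this
  have hGne : ∀ α : Fin n, ¬ G (α : ℕ) ≤ G ((α : ℕ) + 1) := by
    intro α hle
    have heq : G (α : ℕ) = G ((α : ℕ) + 1) := le_antisymm hle (hGa (Nat.le_succ _))
    have h1 := hGr' (α : ℕ)
    have h2 := hGr' ((α : ℕ) + 1)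
    rw [heq] at h1
    have := α.isLt
    omega
  -- the sets S α
  set S : Fin n → Finset (Fin n) :=
    fun α => Finset.univ.filter (fun β => ¬ (G (α : ℕ) ⊓ Fl (β : ℕ) ≤ G ((α : ℕ) + 1)))
    with hS
  have hSne : ∀ α, (S α).Nonempty := by
    intro α
    refine ⟨⟨0, α.pos⟩, ?_⟩
    simp only [S, Finset.mem_filter, Finset.mem_univ, true_and]
    intro hle
    apply hGne α
    calc G (α : ℕ) = G (α : ℕ) ⊓ Fl ((0 : ℕ)) := by rw [hFltop]; simp
    _ ≤ G ((α : ℕ) + 1) := hle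
  set w₀ : Fin n → Fin n := fun α => (S α).max' (hSne α) with hw₀
  have hw₀mem : ∀ α : Fin n, ¬ (G (α : ℕ) ⊓ Fl ((w₀ α : ℕ)) ≤ G ((α : ℕ) + 1)) := by
    intro α
    have := (S α).max'_mem (hSne α)
    simpa [S] using this
  have hxex : ∀ α : Fin n, ∃ x, x ∈ G (α : ℕ) ⊓ Fl ((w₀ α : ℕ)) ∧ x ∉ G ((α : ℕ) + 1) :=
    fun α => SetLike.not_le_iff_exists.mp (hw₀mem α)
  choose b hb1 hb2 using hxex
  have hbG : ∀ α : Fin n, b α ∈ G (α : ℕ) := fun α => (hb1 α).1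
  have hbFl : ∀ α : Fin n, b α ∈ Fl ((w₀ α : ℕ)) := fun α => (hb1 α).2
  -- key property from maximality of w₀ α
  have hkey : ∀ α : Fin n, G (α : ℕ) ⊓ Fl ((w₀ α : ℕ) + 1) ≤ G ((α : ℕ) + 1) := by
    intro α
    by_cases h : (w₀ α : ℕ) + 1 < n
    · set β' : Fin n := ⟨(w₀ α : ℕ) + 1, h⟩ with hβ'
      by_contra hc
      have hmem : β' ∈ S α := by
        simp only [S, Finset.mem_filter, Finset.mem_univ, true_and]
        exact hc
      have := (S α).le_max' β' hmem
      have : (β' : ℕ) ≤ (w₀ α : ℕ) := this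
      simp [hβ'] at this
    · have hn : n ≤ (w₀ α : ℕ) + 1 := by omega
      rw [hFlbot _ hn]
      simp
  -- injectivity of w₀
  have hinj : Function.Injective w₀ := by
    have key : ∀ α α' : Fin n, α < α' → w₀ α = w₀ α' → False := by
      intro α α' hlt heq
      -- b α' ∈ Fl (w₀ α), b α' ∉ Fl (w₀ α + 1)
      have hbα'Fl : b α' ∈ Fl ((w₀ α : ℕ)) := by rw [heq]; exact hbFl α'
      have hbα'nFl : b α' ∉ Fl ((w₀ α : ℕ) + 1) := by
        intro hmem
        apply (hb2 α')
        apply hkey α'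
        rw [heq] at hmem
        exact ⟨hbG α', hmem⟩
      have hsup : Fl ((w₀ α : ℕ)) ≤ Fl ((w₀ α : ℕ) + 1) ⊔ Submodule.span F {b α'} := by
        apply le_sup_span_of_codim_le_one (hFla (Nat.le_succ _)) ?_ hbα'Fl hbα'nFl
        rw [hFlr', hFlr']
        have := (w₀ α).isLt
        omega
      obtain ⟨y, hy, z, hz, hyz⟩ := Submodule.mem_sup.mp (hsup (hbFl α))
      obtain ⟨c, rfl⟩ := Submodule.mem_span_singleton.mp hz
      -- c • b α' ∈ G (α + 1)
      have hα'le : ((α : ℕ) + 1) ≤ (α' : ℕ) := hlt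
      have hzG : c • b α' ∈ G ((α : ℕ) + 1) :=
        Submodule.smul_mem _ c (hGa hα'le (hbG α'))
      have hyG : y ∈ G (α : ℕ) := by
        have : y = b α - c • b α' := by rw [← hyz]; ring
        rw [this]
        exact Submodule.sub_mem _ (hbG α) (hGa (Nat.le_succ _) hzG)
      have hyG' : y ∈ G ((α : ℕ) + 1) := hkey α ⟨hyG, hy⟩
      exact hb2 α (hyz ▸ Submodule.add_mem _ hyG' hzG)
    intro α α' h
    rcases lt_trichotomy α α' with h' | h' | h'
    · exact absurd (key α α' h' h) (by simp)
    · exact h'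
    · exact absurd (key α' α h' h.symm) (by simp)
  refine ⟨b, Equiv.ofBijective w₀ (Finite.injective_iff_bijective.mp hinj), hbG, ?_, ?_⟩
  · intro α
    exact hbFl α
  · -- spanning property
    have claim : ∀ d j, n ≤ j + d →
        G j ≤ Submodule.span F {x | ∃ γ : Fin n, j ≤ (γ : ℕ) ∧ x = b γ} := by
      intro d
      induction d with
      | zero =>
        intro j hj
        rw [hGbot j (by omega)]
        exact bot_le
      | succ d ih =>
        intro j hj
        by_cases hjd : n ≤ j + d
        · exact ih j hjd
        · have hjn : j < n := by omega
          set γj : Fin n := ⟨j, hjn⟩ with hγj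
          have hstep : G j ≤ G (j + 1) ⊔ Submodule.span F {b γj} := by
            apply le_sup_span_of_codim_le_one (hGa (Nat.le_succ _)) ?_ (hbG γj) ?_
            · rw [hGr', hGr']; omega
            · exact hb2 γj
          refine hstep.trans (sup_le ?_ ?_)
          · refine (ih (j + 1) (by omega)).trans (Submodule.span_mono ?_)
            rintro x ⟨γ, hγ, rfl⟩
            exact ⟨γ, by omega, rfl⟩
          · rw [Submodule.span_le]
            rintro x hx
            rw [Set.mem_singleton_iff] at hx
            subst hx
            exact Submodule.subset_span ⟨γj, le_refl _, rfl⟩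
    intro j
    exact claim n j (by omega)

lemma eval_eq_zero_of_arg_zero {n : Fin k → ℕ} (f : Tensor F fun i => Fin (n i))
    (v : ∀ i, Fin (n i) → F) (i₀ : Fin k) (h : v i₀ = 0) : eval f v = 0 := by
  unfold eval
  refine Finset.sum_eq_zero fun γ _ => ?_
  rw [Finset.prod_eq_zero (Finset.mem_univ i₀) (by simp [h]), zero_mul]

lemma eval_sum_smul {n : Fin k → ℕ} (f : Tensor F fun i => Fin (n i))
    (c : ∀ i, Fin (n i) → F) (u : ∀ i, Fin (n i) → Fin (n i) → F) :
    eval f (fun i => ∑ γ, c i γ • u i γ) =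
      ∑ β : ∀ i, Fin (n i), (∏ i, c i (β i)) * eval f (fun i => u i (β i)) := by
  unfold eval
  have h1 : ∀ γ' : ∀ i, Fin (n i),
      (∏ i, (∑ γ, c i γ • u i γ) (γ' i)) =
        ∑ β : ∀ i, Fin (n i), ∏ i, c i (β i) * u i (β i) (γ' i) := by
    intro γ'
    have h := Finset.prod_univ_sum (fun i : Fin k => (Finset.univ : Finset (Fin (n i))))
      (fun i γ => c i γ * u i γ (γ' i))
    simpa [Finset.sum_apply, Pi.smul_apply, smul_eq_mul, Fintype.piFinset_univ] using h
  calc (∑ γ' : ∀ i, Fin (n i), (∏ i, (fun i => ∑ γ, c i γ • u i γ) i (γ' i)) * f γ')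
      = ∑ γ' : ∀ i, Fin (n i),
          ∑ β : ∀ i, Fin (n i), (∏ i, c i (β i) * u i (β i) (γ' i)) * f γ' := by
        refine Finset.sum_congr rfl fun γ' _ => ?_
        rw [show (∏ i, (fun i => ∑ γ, c i γ • u i γ) i (γ' i))
            = ∏ i, (∑ γ, c i γ • u i γ) (γ' i) from rfl, h1, Finset.sum_mul]
    _ = ∑ β : ∀ i, Fin (n i),
          ∑ γ' : ∀ i, Fin (n i), (∏ i, c i (β i) * u i (β i) (γ' i)) * f γ' :=
        Finset.sum_comm
    _ = ∑ β : ∀ i, Fin (n i),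
          (∏ i, c i (β i)) * ∑ γ' : ∀ i, Fin (n i), (∏ i, u i (β i) (γ' i)) * f γ' := by
        refine Finset.sum_congr rfl fun β _ => ?_
        rw [Finset.mul_sum]
        refine Finset.sum_congr rfl fun γ' _ => ?_
        rw [Finset.prod_mul_distrib, mul_assoc]

end Statement5Aux

/-- maximal points of the support w.r.t. one flag tuple inject (by
coordinatewise permutations) into the support w.r.t. any other flag tuple. -/
theorem statement5 {k : ℕ} {F : Type*} [Field F] {n : Fin k → ℕ}
    (f : Tensor F fun i => Fin (n i))
    (Fl G : ∀ i, ℕ → Submodule F (Fin (n i) → F))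
    (hFl : ∀ i, IsCompleteFlag F (Fl i)) (hG : ∀ i, IsCompleteFlag F (G i)) :
    ∃ φ : ∀ i, Equiv.Perm (Fin (n i)),
      (fun α i => φ i (α i)) '' maxPoints (suppFlag f G) ⊆ suppFlag f Fl := by
  choose b w hbG hbFl hspan using fun i => exists_adapted (hG i) (hFl i)
  refine ⟨w, ?_⟩
  rintro _ ⟨α, ⟨hαsupp, hαmax⟩, rfl⟩
  obtain ⟨v, hvG, hvne⟩ := hαsupp
  set b' : ∀ i, Fin (n i) → (Fin (n i) → F) :=
    fun i γ => if (α i : ℕ) ≤ (γ : ℕ) then b i γ else 0 with hb'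
  have hv' : ∀ i, v i ∈ Submodule.span F (Set.range (b' i)) := by
    intro i
    refine Submodule.span_mono ?_ (hspan i ((α i : ℕ)) (hvG i))
    rintro x ⟨γ, hγ, rfl⟩
    exact ⟨γ, by simp only [b']; rw [if_pos hγ]⟩
  choose c hc using fun i => (Submodule.mem_span_range_iff_exists_fun F).mp (hv' i)
  have hev : eval f v =
      ∑ β : ∀ i, Fin (n i), (∏ i, c i (β i)) * eval f (fun i => b' i (β i)) := by
    rw [← eval_sum_smul]
    congr 1
    funext i
    exact (hc i).symm
  rw [hev] at hvne
  obtain ⟨β, -, hβne⟩ := Finset.exists_ne_zero_of_sum_ne_zero hvne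
  have hb'ne : eval f (fun i => b' i (β i)) ≠ 0 := right_ne_zero_of_mul hβne
  have hle : ∀ i, (α i : ℕ) ≤ (β i : ℕ) := by
    intro i
    by_contra h
    exact hb'ne (eval_eq_zero_of_arg_zero f _ i (by simp only [b']; rw [if_neg h]))
  have hfun : (fun i => b' i (β i)) = fun i => b i (β i) :=
    funext fun i => by simp only [b']; rw [if_pos (hle i)]
  rw [hfun] at hb'ne
  have hβsupp : β ∈ suppFlag f G := ⟨fun i => b i (β i), fun i => hbG i (β i), hb'ne⟩
  have hαβ : α ≤ β := Pi.le_def.mpr fun i => Fin.le_def.mpr (hle i)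
  have hαeq : α = β := by
    by_contra hne'
    exact hαmax β hβsupp (lt_of_le_of_ne hαβ hne')
  subst hαeq
  exact ⟨fun i => b i (α i), fun i => hbFl i (α i), hb'ne⟩


end CVZ

end
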